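/- Convergence of proximal points as the parameter vanishes (core of Lemma 4.2/5.2): let D ⊆ ℝⁿ be a nonempty compact set with diameter R = sup_{u,v∈D} ‖u − v‖, let X ⊆ D, let θ̄ : D × X → ℝ and κ ≥ 0 satisfy |θ̄(x₁,z) − θ̄(x₂,z)| ≤ κ ‖x₁ − x₂‖ for all x₁, x₂ ∈ D and z ∈ X. Let z_k ∈ X with z_k → x̄ ∈ D, let γ_k > 0 with γ_k → 0, and for each k let p_k ∈ D minimize x ↦ θ̄(x, z_k) + ‖x − z_k‖²/(2γ_k) over D. Then ‖p_k − x̄‖ ≤ 2 ‖z_k − x̄‖ + √( 2 γ_k κ R ) for every k, and consequently p_k → x̄. -/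

import Mathlib

open scoped RealInnerProductSpace
open Filter Topology

theorem stmt12 {n : ℕ}
    (D X : Set (EuclideanSpace ℝ (Fin n)))
    (hDne : D.Nonempty) (hDcomp : IsCompact D) (hXD : X ⊆ D)
    (θb : EuclideanSpace ℝ (Fin n) → EuclideanSpace ℝ (Fin n) → ℝ)
    (κ : ℝ) (hκ : 0 ≤ κ)
    (hlip : ∀ z ∈ X, ∀ x₁ ∈ D, ∀ x₂ ∈ D, |θb x₁ z - θb x₂ z| ≤ κ * ‖x₁ - x₂‖)
    (zk : ℕ → EuclideanSpace ℝ (Fin n)) (hzk : ∀ k, zk k ∈ X)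
    (xb : EuclideanSpace ℝ (Fin n)) (hxb : xb ∈ D)
    (hzlim : Tendsto zk atTop (𝓝 xb))
    (γk : ℕ → ℝ) (hγk : ∀ k, 0 < γk k) (hγlim : Tendsto γk atTop (𝓝 0))
    (pk : ℕ → EuclideanSpace ℝ (Fin n)) (hpk : ∀ k, pk k ∈ D)
    (hpkmin : ∀ k, ∀ x ∈ D,
      θb (pk k) (zk k) + ‖pk k - zk k‖ ^ 2 / (2 * γk k)
        ≤ θb x (zk k) + ‖x - zk k‖ ^ 2 / (2 * γk k)) :
    (∀ k, ‖pk k - xb‖ ≤ 2 * ‖zk k - xb‖ + Real.sqrt (2 * γk k * κ * Metric.diam D)) ∧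
    Tendsto pk atTop (𝓝 xb) := by
  have key : ∀ k, ‖pk k - xb‖ ≤ 2 * ‖zk k - xb‖ +
      Real.sqrt (2 * γk k * κ * Metric.diam D) := by
    intro k
    have hzD : zk k ∈ D := hXD (hzk k)
    have hmin := hpkmin k (zk k) hzD
    have hγ := hγk k
    simp only [sub_self, norm_zero, ne_eq, OfNat.ofNat_ne_zero, not_false_eq_true,
      zero_pow, zero_div, add_zero] at hmin
    -- ‖pk k - zk k‖ ^ 2 / (2 * γk k) ≤ κ * ‖zk k - pk k‖
    have h1 : ‖pk k - zk k‖ ^ 2 / (2 * γk k) ≤ θb (zk k) (zk k) - θb (pk k) (zk k) := by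
      linarith [hmin]
    have h2 : θb (zk k) (zk k) - θb (pk k) (zk k) ≤ κ * ‖zk k - pk k‖ := by
      calc θb (zk k) (zk k) - θb (pk k) (zk k)
          ≤ |θb (zk k) (zk k) - θb (pk k) (zk k)| := le_abs_self _
        _ ≤ κ * ‖zk k - pk k‖ := hlip (zk k) (hzk k) (zk k) hzD (pk k) (hpk k)
    have hdiam : ‖zk k - pk k‖ ≤ Metric.diam D := by
      rw [← dist_eq_norm]
      exact Metric.dist_le_diam_of_mem hDcomp.isBounded hzD (hpk k)
    have h3 : ‖pk k - zk k‖ ^ 2 ≤ 2 * γk k * κ * Metric.diam D := by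
      have := h1.trans (h2.trans (by nlinarith : κ * ‖zk k - pk k‖ ≤ κ * Metric.diam D))
      rw [div_le_iff₀ (by linarith)] at this
      nlinarith [this]
    have h4 : ‖pk k - zk k‖ ≤ Real.sqrt (2 * γk k * κ * Metric.diam D) := by
      have := Real.sqrt_le_sqrt h3
      rwa [Real.sqrt_sq (norm_nonneg _)] at this
    calc ‖pk k - xb‖ ≤ ‖pk k - zk k‖ + ‖zk k - xb‖ := norm_sub_le_norm_sub_add_norm_sub _ _ _
      _ ≤ Real.sqrt (2 * γk k * κ * Metric.diam D) + ‖zk k - xb‖ := by linarith [h4]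
      _ ≤ 2 * ‖zk k - xb‖ + Real.sqrt (2 * γk k * κ * Metric.diam D) := by
          have := norm_nonneg (zk k - xb); linarith
  refine ⟨key, ?_⟩
  have hznorm : Tendsto (fun k => ‖zk k - xb‖) atTop (𝓝 0) :=
    tendsto_zero_iff_norm_tendsto_zero.mp (tendsto_sub_nhds_zero_iff.mpr hzlim)
  have hinner : Tendsto (fun k => 2 * γk k * κ * Metric.diam D) atTop (𝓝 0) := by
    have := ((hγlim.const_mul 2).mul_const κ).mul_const (Metric.diam D)
    simpa using this
  have hsqrt : Tendsto (fun k => Real.sqrt (2 * γk k * κ * Metric.diam D)) atTop (𝓝 0) := by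
    have := (Real.continuous_sqrt.tendsto 0).comp hinner
    simpa [Function.comp_def, Real.sqrt_zero] using this
  have hrhs : Tendsto (fun k => 2 * ‖zk k - xb‖ + Real.sqrt (2 * γk k * κ * Metric.diam D))
      atTop (𝓝 0) := by
    have := (hznorm.const_mul 2).add hsqrt
    simpa using this
  have hnorm : Tendsto (fun k => ‖pk k - xb‖) atTop (𝓝 0) :=
    squeeze_zero (fun k => norm_nonneg _) key hrhs
  exact tendsto_sub_nhds_zero_iff.mp (tendsto_zero_iff_norm_tendsto_zero.mpr hnorm)
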